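/- Let q, p satisfy [q,p] = i, T_1 = qp + pq, and let l be a natural number. Define the ordering O(q^n p^n) = [Σ_{k=0}^n C(n+l,k) C(n+l,k+l) q^k p^n q^{n−k}] / [Σ_{k=0}^n C(n+l,k) C(n+l,k+l)]. Then O(q^n p^n) = P_n(T_1/2), where P_n(x) = i^n · C(2n+2l,n)^{−1} · ((n+l)!/l!) · Σ_{k=0}^{n} [(−n)_k (n+2l+1)_k (1/2 + i x)_k] / [(1)_k (l+1)_k k!] (the terminating ₃F₂ continuous Hahn polynomial). -/

import Mathlib

set_option maxHeartbeats 1000000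
set_option linter.unusedSectionVars false

open Finset Polynomial

namespace Stmt16Aux


noncomputable def gP (m : ℕ) : ℂ[X] := ∏ a ∈ range m, (X - C (((a : ℂ) + 1) * Complex.I))
noncomputable def fP (k : ℕ) : ℂ[X] := ∏ r ∈ range k, (X + C ((r : ℂ) * Complex.I))

noncomputable def E (k m s : ℕ) : ℂ :=
  (((k + m).choose s * s.factorial * k.choose s : ℕ) : ℂ) * Complex.I ^ s

lemma gP_succ (j : ℕ) : gP (j + 1) = gP j * (X - C (((j : ℂ) + 1) * Complex.I)) :=
  prod_range_succ _ _

lemma W (j : ℕ) (c : ℂ) :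
    gP j * (X + C c) = gP (j + 1) + C (c + ((j : ℂ) + 1) * Complex.I) * gP j := by
  rw [gP_succ, C_add]; ring

lemma keyrec (k m s : ℕ) (hs : s ≤ k) :
    (((k + 1 + m).choose (s + 1) * (s + 1).factorial * (k + 1).choose (s + 1) : ℕ) : ℂ)
      = (((k + m).choose (s + 1) * (s + 1).factorial * k.choose (s + 1) : ℕ) : ℂ)
        + (((k + m).choose s * s.factorial * k.choose s : ℕ) : ℂ)
          * ((k : ℂ) + ((k + m - s : ℕ) : ℂ) + 1) := by
  obtain ⟨u, rfl⟩ : ∃ u, k = s + u := ⟨k - s, by omega⟩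
  rw [show s + u + m - s = u + m by omega, show s + u + 1 + m = s + u + m + 1 by omega]
  have c1 := Nat.choose_succ_right_eq (s + u) s
  have c2 := Nat.choose_succ_right_eq (s + u + m) s
  rw [show s + u - s = u by omega] at c1
  rw [show s + u + m - s = u + m by omega] at c2
  have cc1 : ((s + u).choose (s + 1) : ℂ) * (s + 1) = (s + u).choose s * u := by
    exact_mod_cast c1
  have cc2 : ((s + u + m).choose (s + 1) : ℂ) * (s + 1) = (s + u + m).choose s * (u + m) := by
    exact_mod_cast c2
  rw [Nat.choose_succ_succ' (s + u + m) s, Nat.choose_succ_succ' (s + u) s, Nat.factorial_succ]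
  push_cast
  linear_combination ((s.factorial : ℂ) * (((s + u + m).choose s : ℕ) : ℂ)) * cc1
    + ((s.factorial : ℂ) * (((s + u).choose s : ℕ) : ℂ)) * cc2

lemma keyrecE (k m s : ℕ) (hs : s ≤ k) :
    E (k + 1) m (s + 1)
      = E k m (s + 1) + E k m s * (((k : ℂ) + ((k + m - s : ℕ) : ℂ) + 1) * Complex.I) := by
  unfold E
  rw [pow_succ]
  linear_combination (Complex.I ^ s * Complex.I) * keyrec k m s hs

lemma E_zero (k m : ℕ) : E k m 0 = 1 := by simp [E]

lemma V (k m : ℕ) : fP k * gP m = ∑ s ∈ range (k + 1), C (E k m s) * gP (k + m - s) := by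
  induction k with
  | zero => simp [fP, E_zero]
  | succ k ih =>
    have fstep : fP (k + 1) = fP k * (X + C ((k : ℂ) * Complex.I)) := prod_range_succ _ _
    have step1 : fP (k + 1) * gP m
        = ∑ s ∈ range (k + 1), C (E k m s) * (gP (k + m - s) * (X + C ((k : ℂ) * Complex.I))) := by
      rw [fstep, mul_right_comm, ih, sum_mul]
      simp_rw [mul_assoc]
    rw [step1]
    have step2 : ∀ s ∈ range (k + 1),
        C (E k m s) * (gP (k + m - s) * (X + C ((k : ℂ) * Complex.I)))
          = C (E k m s) * gP (k + m - s + 1)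
            + C (E k m s * (((k : ℂ) + ((k + m - s : ℕ) : ℂ) + 1) * Complex.I)) * gP (k + m - s) := by
      intro s hs
      have harg : (k : ℂ) * Complex.I + (((k + m - s : ℕ) : ℂ) + 1) * Complex.I
          = (((k : ℂ) + ((k + m - s : ℕ) : ℂ) + 1) * Complex.I) := by ring
      rw [W (k + m - s) ((k : ℂ) * Complex.I), harg, mul_add, ← mul_assoc, ← C_mul]
    rw [sum_congr rfl step2, sum_add_distrib]
    -- RHS: peel the target sum
    rw [Finset.sum_range_succ' (fun s => C (E (k + 1) m s) * gP (k + 1 + m - s)) (k + 1)]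
    have step3 : ∀ s ∈ range (k + 1),
        C (E (k + 1) m (s + 1)) * gP (k + 1 + m - (s + 1))
          = C (E k m (s + 1)) * gP (k + m - s)
            + C (E k m s * (((k : ℂ) + ((k + m - s : ℕ) : ℂ) + 1) * Complex.I)) * gP (k + m - s) := by
      intro s hs
      rw [mem_range] at hs
      rw [show k + 1 + m - (s + 1) = k + m - s by omega, keyrecE k m s (by omega), C_add, add_mul]
    rw [sum_congr rfl step3, sum_add_distrib]
    have step4 : ∑ s ∈ range (k + 1), C (E k m s) * gP (k + m - s + 1)
        = ∑ s ∈ range (k + 1), C (E k m (s + 1)) * gP (k + m - s)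
          + C (E (k + 1) m 0) * gP (k + 1 + m - 0) := by
      rw [Finset.sum_range_succ' (fun s => C (E k m s) * gP (k + m - s + 1)) k]
      rw [Finset.sum_range_succ (fun s => C (E k m (s + 1)) * gP (k + m - s)) k]
      have z : C (E k m (k + 1)) * gP (k + m - k) = 0 := by
        have : E k m (k + 1) = 0 := by simp [E, Nat.choose_succ_self]
        rw [this, map_zero, zero_mul]
      rw [z, add_zero, E_zero, E_zero]
      congr 1
      · refine sum_congr rfl fun s hs => ?_
        rw [mem_range] at hs
        rw [show k + m - (s + 1) + 1 = k + m - s by omega]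
      · rw [show k + m - 0 + 1 = k + 1 + m - 0 by omega]
    rw [step4]
    ring



lemma VD (n l s : ℕ) (hs : s ≤ n) :
    ∑ k ∈ range (n + 1), (n + l).choose k * (n + l).choose (k + l) * k.choose s
      = (n + l).choose s * ((n + l - s) + (n + l)).choose (n - s) := by
  have e1 : ∀ k ∈ range (n + 1), (n + l).choose k * (n + l).choose (k + l) * k.choose s
      = ((n + l).choose k * k.choose s) * (n + l).choose (n - k) := by
    intro k hk; rw [mem_range] at hk
    rw [← Nat.choose_symm (by omega : k + l ≤ n + l), show n + l - (k + l) = n - k by omega]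
    ring
  rw [sum_congr rfl e1, show n + 1 = s + (n - s + 1) by omega, Finset.sum_range_add]
  have z : ∑ x ∈ range s, ((n + l).choose x * x.choose s) * (n + l).choose (n - x) = 0 := by
    refine sum_eq_zero fun x hx => ?_
    rw [mem_range] at hx
    rw [Nat.choose_eq_zero_of_lt hx]
    ring
  rw [z, zero_add]
  have e2 : ∀ x ∈ range (n - s + 1),
      ((n + l).choose (s + x) * (s + x).choose s) * (n + l).choose (n - (s + x))
        = (n + l).choose s * ((n + l - s).choose x * (n + l).choose ((n - s) - x)) := by
    intro x hx; rw [mem_range] at hx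
    rw [Nat.choose_mul (by omega : s ≤ s + x),
      show s + x - s = x by omega, show n - (s + x) = n - s - x by omega]
    ring
  rw [sum_congr rfl e2, ← mul_sum]
  congr 1
  rw [Nat.add_choose_eq, Finset.Nat.sum_antidiagonal_eq_sum_range_succ_mk]

lemma Snat (n l : ℕ) : (∑ k ∈ range (n + 1), (n + l).choose k * (n + l).choose (k + l))
    = (2 * n + 2 * l).choose n := by
  have h0 := VD n l 0 (Nat.zero_le n)
  simp only [Nat.choose_zero_right, mul_one, Nat.sub_zero, one_mul] at h0
  rw [show n + l + (n + l) = 2 * n + 2 * l by omega] at h0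
  exact h0

lemma prod_nat_fact (a m : ℕ) :
    a.factorial * ∏ j ∈ range m, (a + 1 + j) = (a + m).factorial := by
  induction m with
  | zero => simp
  | succ m ih =>
      rw [prod_range_succ, ← mul_assoc, ih, show a + (m + 1) = (a + m) + 1 by omega,
        Nat.factorial_succ]
      ring

lemma prod_cast1 (a m : ℕ) :
    ∏ j ∈ range m, ((a : ℂ) + 1 + (j : ℂ)) = ((a + m).factorial : ℂ) / (a.factorial : ℂ) := by
  have h0 : (a.factorial : ℂ) ≠ 0 := Nat.cast_ne_zero.2 (Nat.factorial_ne_zero a)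
  have hc := congrArg (Nat.cast (R := ℂ)) (prod_nat_fact a m)
  push_cast at hc
  rw [eq_div_iff h0]
  linear_combination hc

lemma prod_fall (n m : ℕ) (hm : m ≤ n) :
    (n - m).factorial * ∏ j ∈ range m, (n - j) = n.factorial := by
  induction m with
  | zero => simp
  | succ m ih =>
      have e : (n - (m + 1)).factorial * (n - m) = (n - m).factorial := by
        rw [show n - m = (n - (m + 1)) + 1 by omega, Nat.factorial_succ]
        ring
      calc (n - (m + 1)).factorial * ∏ j ∈ range (m + 1), (n - j)
          = ((n - (m + 1)).factorial * (n - m)) * ∏ j ∈ range m, (n - j) := by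
            rw [prod_range_succ]; ring
        _ = n.factorial := by rw [e, ih (by omega)]

lemma prod_cast2 (n m : ℕ) (hm : m ≤ n) :
    ∏ j ∈ range m, (-(n : ℂ) + (j : ℂ))
      = (-1) ^ m * ((n.factorial : ℂ) / ((n - m).factorial : ℂ)) := by
  have e : ∀ j ∈ range m, -(n : ℂ) + (j : ℂ) = -1 * ((n - j : ℕ) : ℂ) := by
    intro j hj; rw [mem_range] at hj
    rw [Nat.cast_sub (by omega : j ≤ n)]
    ring
  rw [prod_congr rfl e, prod_mul_distrib, prod_const, card_range]
  congr 1
  have h0 : (((n - m).factorial : ℕ) : ℂ) ≠ 0 := Nat.cast_ne_zero.2 (Nat.factorial_ne_zero _)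
  have hc := congrArg (Nat.cast (R := ℂ)) (prod_fall n m hm)
  push_cast at hc
  rw [eq_div_iff h0]
  linear_combination hc

lemma Ipow (n m : ℕ) (hm : m ≤ n) :
    Complex.I ^ (n - m) = Complex.I ^ n * (-1 : ℂ) ^ m * Complex.I ^ m := by
  have h1 : Complex.I ^ (n - m) * Complex.I ^ m = Complex.I ^ n := by
    rw [← pow_add]; congr 1; omega
  have h2 : Complex.I ^ m * Complex.I ^ m = (-1 : ℂ) ^ m := by
    rw [← pow_add, ← two_mul, pow_mul, Complex.I_sq]
  have h3 : ((-1 : ℂ)) ^ m * (-1 : ℂ) ^ m = 1 := by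
    rw [← mul_pow]; norm_num
  calc Complex.I ^ (n - m)
      = Complex.I ^ (n - m) * ((-1 : ℂ) ^ m * (-1 : ℂ) ^ m) := by rw [h3, mul_one]
    _ = Complex.I ^ (n - m) * ((Complex.I ^ m * Complex.I ^ m) * (-1 : ℂ) ^ m) := by rw [h2]
    _ = (Complex.I ^ (n - m) * Complex.I ^ m) * ((-1 : ℂ) ^ m) * Complex.I ^ m := by ring
    _ = Complex.I ^ n * (-1 : ℂ) ^ m * Complex.I ^ m := by rw [h1]

lemma scalar_eq (n l m : ℕ) (hm : m ≤ n) :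
    (((∑ k ∈ range (n + 1), (n + l).choose k * (n + l).choose (k + l) : ℕ)) : ℂ)⁻¹ *
      (((n.choose (n - m) * (n - m).factorial *
          ((n + l).choose (n - m) * ((n + l - (n - m)) + (n + l)).choose (n - (n - m))) : ℕ) : ℂ)
        * Complex.I ^ (n - m))
      = (Complex.I ^ n * (((2 * n + 2 * l).choose n : ℂ))⁻¹ *
        (((n + l).factorial : ℂ) / (l.factorial : ℂ)) *
        (∏ j ∈ range m, (-(n : ℂ) + (j : ℂ))) *
        (∏ j ∈ range m, ((n : ℂ) + 2 * (l : ℂ) + 1 + (j : ℂ))) /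
        ((∏ j ∈ range m, (1 + (j : ℂ))) * (∏ j ∈ range m, ((l : ℂ) + 1 + (j : ℂ))) *
          (m.factorial : ℂ))) * Complex.I ^ m := by
  rw [Snat]
  rw [show n + l - (n - m) = l + m by omega, show n - (n - m) = m by omega]
  rw [prod_cast2 n m hm]
  have e2 : ∀ j ∈ range m, (n : ℂ) + 2 * (l : ℂ) + 1 + (j : ℂ)
      = ((n + 2 * l : ℕ) : ℂ) + 1 + (j : ℂ) := by intro j _; push_cast; ring
  rw [prod_congr rfl e2, prod_cast1 (n + 2 * l) m]
  have e3 : ∀ j ∈ range m, (1 : ℂ) + (j : ℂ) = ((0 : ℕ) : ℂ) + 1 + (j : ℂ) := by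
    intro j _; push_cast; ring
  rw [prod_congr rfl e3, prod_cast1 0 m]
  have e4 : ∀ j ∈ range m, (l : ℂ) + 1 + (j : ℂ) = ((l : ℕ) : ℂ) + 1 + (j : ℂ) := by
    intro j _; push_cast; ring
  rw [prod_congr rfl e4, prod_cast1 l m]
  rw [Ipow n m hm]
  push_cast
  rw [Nat.cast_choose ℂ (show n - m ≤ n by omega),
    Nat.cast_choose ℂ (show n - m ≤ n + l by omega),
    Nat.cast_choose ℂ (show m ≤ l + m + (n + l) by omega),
    Nat.cast_choose ℂ (show n ≤ 2 * n + 2 * l by omega)]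
  rw [show n - (n - m) = m by omega, show n + l - (n - m) = l + m by omega,
    show l + m + (n + l) - m = n + 2 * l by omega,
    show l + m + (n + l) = n + 2 * l + m by omega]
  rw [show 2 * n + 2 * l - n = n + 2 * l by omega]
  have hfac : ∀ a : ℕ, ((a.factorial : ℕ) : ℂ) ≠ 0 :=
    fun a => Nat.cast_ne_zero.2 (Nat.factorial_ne_zero a)
  field_simp [hfac (n - m), hfac l, hfac m, hfac (l + m), hfac (n + 2 * l), hfac n,
    hfac (n + l), hfac (n + 2 * l + m), hfac (2 * n + 2 * l)]
  simp


lemma factor_smul (j : ℕ) : (C (1 + (j : ℂ)) + C Complex.I * X)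
    = Complex.I • (X - C (((j : ℂ) + 1) * Complex.I)) := by
  rw [Polynomial.smul_eq_C_mul, mul_sub, ← C_mul]
  have e2 : Complex.I * (((j : ℂ) + 1) * Complex.I) = -(1 + (j : ℂ)) := by
    have h3 : Complex.I * Complex.I = -1 := Complex.I_mul_I
    linear_combination ((j : ℂ) + 1) * h3
  rw [e2, map_neg, sub_neg_eq_add]
  ring

lemma prodIk (k : ℕ) :
    ∏ j ∈ range k, (C (1 + (j : ℂ)) + C Complex.I * X) = Complex.I ^ k • gP k := by
  induction k with
  | zero => simp [gP]
  | succ k ih =>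
      rw [prod_range_succ, ih, factor_smul k, smul_mul_smul_comm, ← pow_succ]
      congr 1
      simp only [gP, prod_range_succ]


theorem polyMain (n l : ℕ) :
    (((∑ k ∈ range (n + 1), (n + l).choose k * (n + l).choose (k + l) : ℕ) : ℂ))⁻¹ •
        ∑ k ∈ range (n + 1), (((n + l).choose k * (n + l).choose (k + l) : ℕ) : ℂ[X]) *
          (fP k * gP (n - k))
      = ∑ k ∈ range (n + 1),
          (Complex.I ^ n * (((2 * n + 2 * l).choose n : ℂ))⁻¹ *
            (((n + l).factorial : ℂ) / (l.factorial : ℂ)) *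
            (∏ j ∈ range k, (-(n : ℂ) + (j : ℂ))) *
            (∏ j ∈ range k, ((n : ℂ) + 2 * (l : ℂ) + 1 + (j : ℂ))) /
            ((∏ j ∈ range k, (1 + (j : ℂ))) * (∏ j ∈ range k, ((l : ℂ) + 1 + (j : ℂ))) *
              (k.factorial : ℂ))) •
            ∏ j ∈ range k, (C (1 + (j : ℂ)) + C Complex.I * X) := by
  have hA : ∀ k ∈ range (n + 1),
      (((n + l).choose k * (n + l).choose (k + l) : ℕ) : ℂ[X]) * (fP k * gP (n - k))
        = ∑ s ∈ range (n + 1),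
            C ((((n + l).choose k * (n + l).choose (k + l) : ℕ) : ℂ)
              * ((((n.choose s * s.factorial * k.choose s : ℕ)) : ℂ) * Complex.I ^ s))
              * gP (n - s) := by
    intro k hk
    rw [mem_range] at hk
    rw [V k (n - k)]
    have hext : ∑ s ∈ range (k + 1), C (E k (n - k) s) * gP (k + (n - k) - s)
        = ∑ s ∈ range (n + 1), C (E k (n - k) s) * gP (k + (n - k) - s) := by
      refine Finset.sum_subset (range_subset_range.2 (by omega)) fun s _ hs => ?_
      rw [mem_range, not_lt] at hs
      have hz : E k (n - k) s = 0 := by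
        simp [E, Nat.choose_eq_zero_of_lt (show k < s by omega)]
      rw [hz, map_zero, zero_mul]
    rw [hext, mul_sum]
    refine sum_congr rfl fun s hs => ?_
    rw [show k + (n - k) = n by omega, ← C_eq_natCast, ← mul_assoc, ← C_mul, E,
      show k + (n - k) = n by omega]
  rw [sum_congr rfl hA, Finset.sum_comm]
  have hB : ∀ s ∈ range (n + 1),
      (∑ k ∈ range (n + 1),
        C ((((n + l).choose k * (n + l).choose (k + l) : ℕ) : ℂ)
          * ((((n.choose s * s.factorial * k.choose s : ℕ)) : ℂ) * Complex.I ^ s)) * gP (n - s))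
      = C (((n.choose s * s.factorial *
              ((n + l).choose s * ((n + l - s) + (n + l)).choose (n - s)) : ℕ) : ℂ)
            * Complex.I ^ s) * gP (n - s) := by
    intro s hs
    rw [mem_range] at hs
    rw [← sum_mul, ← map_sum]
    congr 2
    have e : ∀ k ∈ range (n + 1),
        (((n + l).choose k * (n + l).choose (k + l) : ℕ) : ℂ)
            * ((((n.choose s * s.factorial * k.choose s : ℕ)) : ℂ) * Complex.I ^ s)
          = ((((n + l).choose k * (n + l).choose (k + l) * k.choose s)
              * (n.choose s * s.factorial) : ℕ) : ℂ) * Complex.I ^ s := by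
      intro k _
      push_cast
      ring
    rw [sum_congr rfl e, ← sum_mul, ← Nat.cast_sum, ← Finset.sum_mul, VD n l s (by omega)]
    push_cast
    ring
  rw [sum_congr rfl hB]
  have refl := Finset.sum_range_reflect
    (fun s => C (((n.choose s * s.factorial *
        ((n + l).choose s * ((n + l - s) + (n + l)).choose (n - s)) : ℕ) : ℂ)
        * Complex.I ^ s) * gP (n - s)) (n + 1)
  simp only [Nat.add_sub_cancel] at refl
  rw [← refl, smul_sum]
  refine sum_congr rfl fun m hm => ?_
  rw [mem_range] at hm
  have sc := scalar_eq n l m (by omega)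
  rw [show n - (n - m) = m by omega, show n + l - (n - m) = l + m by omega] at sc
  rw [show n - (n - m) = m by omega, show n + l - (n - m) = l + m by omega]
  rw [prodIk m, smul_smul, Polynomial.smul_eq_C_mul, ← mul_assoc, ← C_mul,
    Polynomial.smul_eq_C_mul]
  exact congrArg (fun z => C z * gP m) sc

lemma list_range_prod {M : Type*} [CommMonoid M] (F : ℕ → M) (k : ℕ) :
    ((List.range k).map F).prod = ∏ j ∈ range k, F j := by
  induction k with
  | zero => simp
  | succ k ih =>
      rw [List.range_succ, List.map_append, List.prod_append, prod_range_succ, ih]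
      simp

section AlgebraPart


variable {A : Type*} [Ring A] [Algebra ℂ A] (q p : A)
  (h : q * p - p * q = algebraMap ℂ A Complex.I)

include h

lemma hpq : p * q = q * p - algebraMap ℂ A Complex.I := by rw [← h, sub_sub_cancel]

lemma hqt : q * (q * p) = (q * p + algebraMap ℂ A Complex.I) * q := by
  have e : q * (q * p) - q * p * q = algebraMap ℂ A Complex.I * q := by
    rw [mul_assoc, ← mul_sub, h, Algebra.commutes]
  rw [add_mul, ← e]; abel

lemma hpt : p * (q * p) = (q * p - algebraMap ℂ A Complex.I) * p := by
  rw [← mul_assoc, hpq q p h]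

lemma q_aeval (f : ℂ[X]) :
    q * aeval (q * p) f = aeval (q * p) (f.comp (X + C Complex.I)) * q := by
  induction f using Polynomial.induction_on with
  | C a => simp [Algebra.commutes]
  | add f g hf hg => simp only [add_comp, map_add, mul_add, add_mul, hf, hg]
  | monomial m b ih =>
      have e1 : (C b * X ^ (m + 1)) = (C b * X ^ m) * X := by ring
      rw [e1, map_mul, aeval_X, ← mul_assoc, ih, mul_assoc, hqt q p h]
      conv_rhs => rw [mul_comp, X_comp, map_mul, map_add, aeval_X, aeval_C]
      rw [← mul_assoc]

lemma p_aeval (f : ℂ[X]) :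
    p * aeval (q * p) f = aeval (q * p) (f.comp (X - C Complex.I)) * p := by
  induction f using Polynomial.induction_on with
  | C a => simp [Algebra.commutes]
  | add f g hf hg => simp only [add_comp, map_add, mul_add, add_mul, hf, hg]
  | monomial m b ih =>
      have e1 : (C b * X ^ (m + 1)) = (C b * X ^ m) * X := by ring
      rw [e1, map_mul, aeval_X, ← mul_assoc, ih, mul_assoc, hpt q p h]
      conv_rhs => rw [mul_comp, X_comp, map_mul, map_sub, aeval_X, aeval_C]
      rw [← mul_assoc]

omit h

lemma fco (k : ℕ) : (fP k).comp (X + C Complex.I) * X = fP (k + 1) := by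
  rw [fP, Polynomial.prod_comp, fP, prod_range_succ']
  congr 1
  · refine prod_congr rfl fun r _ => ?_
    rw [add_comp, X_comp, C_comp, add_assoc, ← C_add]
    congr 2
    push_cast
    ring
  · simp

lemma gco (m : ℕ) : (gP m).comp (X - C Complex.I) * (X - C Complex.I) = gP (m + 1) := by
  rw [gP, Polynomial.prod_comp, gP, prod_range_succ']
  congr 1
  · refine prod_congr rfl fun r _ => ?_
    rw [sub_comp, X_comp, C_comp, sub_sub, ← C_add]
    congr 2
    push_cast
    ring
  · simp

include h

lemma qk_pk (k : ℕ) : q ^ k * p ^ k = aeval (q * p) (fP k) := by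
  induction k with
  | zero => simp [fP]
  | succ k ih =>
      have e : q ^ (k + 1) * p ^ (k + 1) = q * (q ^ k * p ^ k) * p := by
        rw [pow_succ' q, pow_succ p]; simp only [mul_assoc]
      rw [e, ih, ← fco, map_mul, aeval_X, mul_assoc, ← mul_assoc,
        q_aeval q p h, mul_assoc]

lemma pk_qk (m : ℕ) : p ^ m * q ^ m = aeval (q * p) (gP m) := by
  induction m with
  | zero => simp [gP]
  | succ m ih =>
      have e : p ^ (m + 1) * q ^ (m + 1) = p * (p ^ m * q ^ m) * q := by
        rw [pow_succ' p, pow_succ q]; simp only [mul_assoc]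
      have epq : p * q = aeval (q * p) (X - C Complex.I) := by
        rw [map_sub, aeval_X, aeval_C, hpq q p h]
      rw [e, ih, ← gco, map_mul, mul_assoc, ← epq, ← mul_assoc,
        p_aeval q p h, mul_assoc]

lemma main_elem {k n : ℕ} (hk : k ≤ n) :
    q ^ k * p ^ n * q ^ (n - k) = aeval (q * p) (fP k * gP (n - k)) := by
  have e : p ^ n = p ^ k * p ^ (n - k) := by rw [← pow_add]; congr 1; omega
  rw [e, map_mul, ← qk_pk q p h, ← pk_qk q p h]
  simp only [mul_assoc]


lemma factor_elem (j : ℕ) :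
    algebraMap ℂ A ((1 : ℂ) / 2 + (j : ℂ)) + (Complex.I / 2) • (q * p + p * q)
      = aeval (q * p) (C (1 + (j : ℂ)) + C Complex.I * X) := by
  conv_rhs => rw [map_add, map_mul, aeval_C, aeval_C, aeval_X]
  rw [hpq q p h, Algebra.smul_def, mul_add, mul_sub, ← map_mul]
  have e2 : Complex.I / 2 * Complex.I = -(1 / 2 : ℂ) := by
    have h3 : Complex.I * Complex.I = -1 := Complex.I_mul_I
    linear_combination (1 / 2 : ℂ) * h3
  rw [e2, map_neg, sub_neg_eq_add]
  have e3 : algebraMap ℂ A (Complex.I / 2) * (q * p) + algebraMap ℂ A (Complex.I / 2) * (q * p)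
      = algebraMap ℂ A Complex.I * (q * p) := by
    rw [← add_mul, ← map_add]
    norm_num
  have e4 : algebraMap ℂ A ((1 : ℂ) / 2 + (j : ℂ)) + algebraMap ℂ A ((1 : ℂ) / 2)
      = algebraMap ℂ A (1 + (j : ℂ)) := by
    rw [← map_add]
    congr 1
    ring
  calc algebraMap ℂ A ((1 : ℂ) / 2 + (j : ℂ)) + (algebraMap ℂ A (Complex.I / 2) * (q * p)
        + (algebraMap ℂ A (Complex.I / 2) * (q * p) + algebraMap ℂ A ((1 : ℂ) / 2)))
      = (algebraMap ℂ A ((1 : ℂ) / 2 + (j : ℂ)) + algebraMap ℂ A ((1 : ℂ) / 2))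
        + (algebraMap ℂ A (Complex.I / 2) * (q * p)
            + algebraMap ℂ A (Complex.I / 2) * (q * p)) := by abel
    _ = algebraMap ℂ A (1 + (j : ℂ)) + algebraMap ℂ A Complex.I * (q * p) := by rw [e3, e4]

end AlgebraPart
end Stmt16Aux

open Stmt16Aux

open Finset in
theorem stmt_16 {A : Type*} [Ring A] [Algebra ℂ A] (q p : A)
    (h : q * p - p * q = algebraMap ℂ A Complex.I) (n l : ℕ) :
    ((((∑ k ∈ range (n + 1), (n + l).choose k * (n + l).choose (k + l) : ℕ) : ℂ))⁻¹ •
        ∑ k ∈ range (n + 1), (((n + l).choose k * (n + l).choose (k + l) : ℕ) : A) *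
          (q ^ k * p ^ n * q ^ (n - k))) =
    ∑ k ∈ range (n + 1),
      (Complex.I ^ n * (((2 * n + 2 * l).choose n : ℂ))⁻¹ *
        (((n + l).factorial : ℂ) / (l.factorial : ℂ)) *
        (∏ j ∈ range k, (-(n : ℂ) + (j : ℂ))) *
        (∏ j ∈ range k, ((n : ℂ) + 2 * (l : ℂ) + 1 + (j : ℂ))) /
        ((∏ j ∈ range k, (1 + (j : ℂ))) * (∏ j ∈ range k, ((l : ℂ) + 1 + (j : ℂ))) *
          (k.factorial : ℂ))) •
      ((List.range k).map (fun j =>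
        algebraMap ℂ A ((1 : ℂ) / 2 + (j : ℂ)) +
          (Complex.I / 2) • (q * p + p * q))).prod := by
  have hL : ∀ k ∈ range (n + 1),
      (((n + l).choose k * (n + l).choose (k + l) : ℕ) : A) * (q ^ k * p ^ n * q ^ (n - k))
        = aeval (q * p)
            ((((n + l).choose k * (n + l).choose (k + l) : ℕ) : ℂ[X]) * (fP k * gP (n - k))) := by
    intro k hk
    rw [mem_range] at hk
    rw [map_mul, map_natCast, main_elem q p h (show k ≤ n by omega)]
  have hR : ∀ k ∈ range (n + 1),
      (Complex.I ^ n * (((2 * n + 2 * l).choose n : ℂ))⁻¹ *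
        (((n + l).factorial : ℂ) / (l.factorial : ℂ)) *
        (∏ j ∈ range k, (-(n : ℂ) + (j : ℂ))) *
        (∏ j ∈ range k, ((n : ℂ) + 2 * (l : ℂ) + 1 + (j : ℂ))) /
        ((∏ j ∈ range k, (1 + (j : ℂ))) * (∏ j ∈ range k, ((l : ℂ) + 1 + (j : ℂ))) *
          (k.factorial : ℂ))) •
      ((List.range k).map (fun j =>
        algebraMap ℂ A ((1 : ℂ) / 2 + (j : ℂ)) +
          (Complex.I / 2) • (q * p + p * q))).prod
      = aeval (q * p)
          ((Complex.I ^ n * (((2 * n + 2 * l).choose n : ℂ))⁻¹ *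
            (((n + l).factorial : ℂ) / (l.factorial : ℂ)) *
            (∏ j ∈ range k, (-(n : ℂ) + (j : ℂ))) *
            (∏ j ∈ range k, ((n : ℂ) + 2 * (l : ℂ) + 1 + (j : ℂ))) /
            ((∏ j ∈ range k, (1 + (j : ℂ))) * (∏ j ∈ range k, ((l : ℂ) + 1 + (j : ℂ))) *
              (k.factorial : ℂ))) •
            ∏ j ∈ range k, (C (1 + (j : ℂ)) + C Complex.I * X)) := by
    intro k hk
    simp only [bind_pure_comp, List.map_eq_map, List.map_map]
    have em : (List.range k).map ((fun j =>
          algebraMap ℂ A ((1 : ℂ) / 2 + j) + (Complex.I / 2) • (q * p + p * q))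
            ∘ (fun a : ℕ => (a : ℂ)))
        = ((List.range k).map (fun j : ℕ => C (1 + (j : ℂ)) + C Complex.I * X)).map
            (aeval (q * p)) := by
      rw [List.map_map]
      refine List.map_congr_left fun j _ => ?_
      exact factor_elem q p h j
    rw [em, ← map_list_prod (aeval (q * p)), list_range_prod, map_smul]
  rw [sum_congr rfl hL, ← map_sum, ← map_smul, sum_congr rfl hR, ← map_sum]
  exact congrArg _ (polyMain n l)
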